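/- Let (Ω, 𝔉, ℙ) be a probability space and a : Ω → ℝ measurable with 1 ≤ a(ω) ≤ M for ℙ-almost every ω, for some constant M ≥ 1, and set Z = ∫_Ω a dℙ. Then the function V₀ = a/Z − 1 satisfies ∫_Ω V₀ dℙ = 0 and ∫_Ω (1 + V₀(ω))²/a(ω) dℙ(ω) = 1/Z, and for every V ∈ L²(Ω, ℙ; ℝ) with ∫_Ω V dℙ = 0 one has ∫_Ω (1 + V(ω))²/a(ω) dℙ(ω) ≥ 1/Z. In particular the minimum value of this functional over mean-zero square-integrable V equals 1/Z. -/

import Mathlib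

open MeasureTheory

/-- One-dimensional effective diffusion computation: with `1 ≤ a ≤ M` a.e. and `Z = ∫ a dℙ`,
the function `V₀ = a/Z − 1` has mean zero and `∫ (1+V₀)²/a dℙ = 1/Z`, and every mean-zero
`V ∈ L²` satisfies `∫ (1+V)²/a dℙ ≥ 1/Z`; in particular the minimum value of this functional
over mean-zero square-integrable `V` equals `1/Z`. -/
theorem one_dim_effective_diffusion {Ω : Type*} [MeasurableSpace Ω] (ℙ : Measure Ω)
    [IsProbabilityMeasure ℙ] (a : Ω → ℝ) (hmeas : Measurable a) (M : ℝ) (hM : 1 ≤ M)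
    (hb : ∀ᵐ ω ∂ℙ, 1 ≤ a ω ∧ a ω ≤ M) (Z : ℝ) (hZ : Z = ∫ ω, a ω ∂ℙ) :
    (∫ ω, (a ω / Z - 1) ∂ℙ) = 0 ∧
    (∫ ω, (1 + (a ω / Z - 1)) ^ 2 / a ω ∂ℙ) = 1 / Z ∧
    (∀ V : Ω → ℝ, MemLp V 2 ℙ → (∫ ω, V ω ∂ℙ) = 0 →
      (∫ ω, (1 + V ω) ^ 2 / a ω ∂ℙ) ≥ 1 / Z) ∧
    IsLeast {r : ℝ | ∃ V : Ω → ℝ, MemLp V 2 ℙ ∧ (∫ ω, V ω ∂ℙ) = 0 ∧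
      r = ∫ ω, (1 + V ω) ^ 2 / a ω ∂ℙ} (1 / Z) := by
  have ha_int : Integrable a ℙ := by
    apply Integrable.mono' (integrable_const M) hmeas.aestronglyMeasurable
    filter_upwards [hb] with ω h
    rw [Real.norm_eq_abs, abs_of_nonneg (by linarith [h.1])]
    exact h.2
  have hZ1 : (1:ℝ) ≤ Z := by
    have h1 : (1:ℝ) = ∫ _ω, (1:ℝ) ∂ℙ := by simp
    rw [hZ, h1]
    exact integral_mono_ae (integrable_const 1) ha_int (hb.mono fun ω h => h.1)
  have hZpos : 0 < Z := lt_of_lt_of_le one_pos hZ1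
  have hZne : Z ≠ 0 := ne_of_gt hZpos
  -- Part 1
  have part1 : (∫ ω, (a ω / Z - 1) ∂ℙ) = 0 := by
    rw [integral_sub (ha_int.div_const Z) (integrable_const 1), integral_div, ← hZ,
      integral_const]
    simp [div_self hZne]
  -- Part 2
  have part2 : (∫ ω, (1 + (a ω / Z - 1)) ^ 2 / a ω ∂ℙ) = 1 / Z := by
    have hcong : ∀ᵐ ω ∂ℙ, (1 + (a ω / Z - 1)) ^ 2 / a ω = a ω / Z ^ 2 := by
      filter_upwards [hb] with ω h
      have ha0 : a ω ≠ 0 := by linarith [h.1]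
      field_simp
      ring
    rw [integral_congr_ae hcong, integral_div, ← hZ, sq]
    field_simp
  -- Part 3
  have part3 : ∀ V : Ω → ℝ, MemLp V 2 ℙ → (∫ ω, V ω ∂ℙ) = 0 →
      (∫ ω, (1 + V ω) ^ 2 / a ω ∂ℙ) ≥ 1 / Z := by
    intro V hV hVmean
    have hVint : Integrable V ℙ := hV.integrable one_le_two
    have h1V : MemLp (fun ω => 1 + V ω) 2 ℙ := (memLp_const (1:ℝ)).add hV
    have hsq : Integrable (fun ω => (1 + V ω) ^ 2) ℙ := h1V.integrable_sq
    have hlhs_meas : AEStronglyMeasurable (fun ω => (1 + V ω) ^ 2 / a ω) ℙ := by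
      simpa [div_eq_mul_inv, Pi.mul_def, Pi.pow_def, Pi.inv_def] using
        ((h1V.aestronglyMeasurable).pow 2).mul hmeas.inv.aestronglyMeasurable
    have hlhs_int : Integrable (fun ω => (1 + V ω) ^ 2 / a ω) ℙ := by
      apply Integrable.mono' hsq hlhs_meas
      filter_upwards [hb] with ω h
      rw [Real.norm_eq_abs, abs_of_nonneg (div_nonneg (sq_nonneg _) (by linarith [h.1]))]
      exact div_le_self (sq_nonneg _) h.1
    have hA : Integrable (fun ω => 1 + V ω) ℙ := (integrable_const 1).add hVint
    have hrhs_int : Integrable (fun ω => (2 / Z) * (1 + V ω) - (1 / Z ^ 2) * a ω) ℙ :=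
      (hA.const_mul _).sub (ha_int.const_mul _)
    have hpt : ∀ᵐ ω ∂ℙ,
        (2 / Z) * (1 + V ω) - (1 / Z ^ 2) * a ω ≤ (1 + V ω) ^ 2 / a ω := by
      filter_upwards [hb] with ω h
      have hapos : (0:ℝ) < a ω := by linarith [h.1]
      have key : (1 + V ω) ^ 2 / a ω - ((2 / Z) * (1 + V ω) - (1 / Z ^ 2) * a ω)
          = ((1 + V ω) * Z - a ω) ^ 2 / (a ω * Z ^ 2) := by
        field_simp
        ring
      have hnn : 0 ≤ ((1 + V ω) * Z - a ω) ^ 2 / (a ω * Z ^ 2) :=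
        div_nonneg (sq_nonneg _) (by positivity)
      linarith [key ▸ hnn]
    have hineq := integral_mono_ae hrhs_int hlhs_int hpt
    have hrhs_val : (∫ ω, ((2 / Z) * (1 + V ω) - (1 / Z ^ 2) * a ω) ∂ℙ) = 1 / Z := by
      rw [integral_sub (hA.const_mul _) (ha_int.const_mul _),
        integral_const_mul, integral_const_mul,
        integral_add (integrable_const 1) hVint, hVmean, ← hZ, integral_const]
      simp only [measure_univ, probReal_univ, ENNReal.toReal_one, smul_eq_mul, one_mul, add_zero]
      field_simp
      ring
    rw [hrhs_val] at hineq
    exact hineq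
  refine ⟨part1, part2, part3, ?_, ?_⟩
  · refine ⟨fun ω => a ω / Z - 1, ?_, part1, part2.symm⟩
    apply MemLp.of_bound (((hmeas.div_const Z).sub measurable_const).aestronglyMeasurable)
      (M + 1)
    filter_upwards [hb] with ω h
    have h0 : 0 ≤ a ω / Z := div_nonneg (by linarith [h.1]) (le_of_lt hZpos)
    have h2 : a ω / Z ≤ a ω := div_le_self (by linarith [h.1]) hZ1
    rw [Real.norm_eq_abs, Pi.sub_apply, abs_sub_le_iff]
    constructor <;> linarith [h.2]
  · rintro r ⟨V, hV, hVmean, rfl⟩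
    exact part3 V hV hVmean
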